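/- For all u, η, z₁, z₂ ∈ ℂ such that θ is nonzero at each of u, −u, η, u+η, z₁, z₂, z₁−z₂, z₁+η and all sums appearing below, one has φ(η+u, z₁−z₂)·φ(η, z₂)·φ(u, η) = φ(u, z₁−z₂)·φ(η, z₁)·φ(u, η) + φ(−u, z₂)·φ(u, z₁+η)·φ(η, z₁). -/

import Mathlib

open Complex

noncomputable section

/-- The odd Jacobi theta function
`θ(z) = q^{1/8} · Σ_{n ∈ ℤ} (−1)^n exp(2πi( n(n+1)τ/2 + n z ))`, `q = exp(2πiτ)`. -/
def theta (τ z : ℂ) : ℂ :=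
  Complex.exp (2 * (Real.pi : ℂ) * I * τ / 8) *
    ∑' n : ℤ, (-1 : ℂ) ^ n *
      Complex.exp (2 * (Real.pi : ℂ) * I * ((n : ℂ) * ((n : ℂ) + 1) * τ / 2 + (n : ℂ) * z))

/-- The derivative `θ'` of `θ` in `z`. -/
def theta' (τ : ℂ) : ℂ → ℂ := deriv (theta τ)

/-- `E₁(z) = θ'(z)/θ(z)`. -/
def E₁ (τ z : ℂ) : ℂ := theta' τ z / theta τ z

/-- `E₂(z) = −E₁'(z)`. -/
def E₂ (τ z : ℂ) : ℂ := - deriv (fun w => E₁ τ w) z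

/-- The Kronecker function `φ(u,z) = θ(u+z)·θ'(0)/(θ(u)·θ(z))`. -/
def phi (τ u z : ℂ) : ℂ := theta τ (u + z) * theta' τ 0 / (theta τ u * theta τ z)

namespace PhiAux

def gterm (τ x : ℂ) (n : ℤ) : ℂ :=
  (-1 : ℂ) ^ n *
    Complex.exp (2 * (Real.pi : ℂ) * I * ((n : ℂ) * ((n : ℂ) + 1) * τ / 2 + (n : ℂ) * x))
def pterm (τ w : ℂ) (n : ℤ) : ℂ :=
  Complex.exp (2 * (Real.pi : ℂ) * I * ((n : ℂ) * ((n : ℂ) + 1) * τ + (n : ℂ) * w))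
def qterm (τ w : ℂ) (n : ℤ) : ℂ :=
  Complex.exp (2 * (Real.pi : ℂ) * I * ((n : ℂ) * (n : ℂ) * τ + (n : ℂ) * w))
def S (τ x : ℂ) : ℂ := ∑' n : ℤ, gterm τ x n
def P (τ w : ℂ) : ℂ := ∑' n : ℤ, pterm τ w n
def Q (τ w : ℂ) : ℂ := ∑' n : ℤ, qterm τ w n
def E (w : ℂ) : ℂ := Complex.exp (2 * (Real.pi : ℂ) * I * w)

lemma E_ne (w : ℂ) : E w ≠ 0 := Complex.exp_ne_zero _

lemma E_sub (v w : ℂ) : E (w - v) = E w / E v := by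
  rw [E, E, E, show 2*(Real.pi:ℂ)*I*(w-v) = 2*(Real.pi:ℂ)*I*w - 2*(Real.pi:ℂ)*I*v by ring,
    Complex.exp_sub]

lemma theta_S (τ z : ℂ) : theta τ z = Complex.exp (2 * (Real.pi : ℂ) * I * τ / 8) * S τ z := rfl

lemma neg_one_zpow (n : ℤ) : ((-1 : ℂ)) ^ n = Complex.exp ((n : ℂ) * ((Real.pi : ℂ) * I)) := by
  rw [Complex.exp_int_mul, Complex.exp_pi_mul_I]

lemma gterm_eq (τ x : ℂ) (n : ℤ) : gterm τ x n = jacobiTheta₂_term n (x + τ/2 + 1/2) τ := by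
  rw [gterm, jacobiTheta₂_term, neg_one_zpow, ← Complex.exp_add]; congr 1; push_cast; ring
lemma pterm_eq (τ w : ℂ) (n : ℤ) : pterm τ w n = jacobiTheta₂_term n (w + τ) (2*τ) := by
  rw [pterm, jacobiTheta₂_term]; congr 1; push_cast; ring
lemma qterm_eq (τ w : ℂ) (n : ℤ) : qterm τ w n = jacobiTheta₂_term n w (2*τ) := by
  rw [qterm, jacobiTheta₂_term]; congr 1; push_cast; ring

lemma summable_norm_jt {τ : ℂ} (hτ : 0 < τ.im) (z : ℂ) :
    Summable fun n : ℤ ↦ ‖jacobiTheta₂_term n z τ‖ := by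
  apply (summable_pow_mul_jacobiTheta₂_term_bound |z.im| hτ 0).of_nonneg_of_le
    (fun n => norm_nonneg _)
  intro n
  simpa only [pow_zero, one_mul] using norm_jacobiTheta₂_term_le hτ le_rfl le_rfl n

lemma hg {τ : ℂ} (hτ : 0 < τ.im) (x : ℂ) : Summable fun n : ℤ ↦ ‖gterm τ x n‖ := by
  simp only [gterm_eq]; exact summable_norm_jt hτ _
lemma hτ2 {τ : ℂ} (hτ : 0 < τ.im) : 0 < (2*τ).im := by
  simp [Complex.mul_im]; linarith
lemma hp {τ : ℂ} (hτ : 0 < τ.im) (w : ℂ) : Summable fun n : ℤ ↦ ‖pterm τ w n‖ := by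
  simp only [pterm_eq]; exact summable_norm_jt (hτ2 hτ) _
lemma hq {τ : ℂ} (hτ : 0 < τ.im) (w : ℂ) : Summable fun n : ℤ ↦ ‖qterm τ w n‖ := by
  simp only [qterm_eq]; exact summable_norm_jt (hτ2 hτ) _

lemma term_even (τ x y : ℂ) (a b : ℤ) :
    gterm τ x (a + b) * gterm τ y (a - b) = pterm τ (x + y) a * qterm τ (x - y) b := by
  have h : gterm τ x (a + b) * gterm τ y (a - b)
      = Complex.exp ((a : ℂ) * (2 * (Real.pi : ℂ) * I)) *
        (pterm τ (x + y) a * qterm τ (x - y) b) := by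
    rw [gterm, gterm, pterm, qterm, neg_one_zpow, neg_one_zpow]
    rw [← Complex.exp_add, ← Complex.exp_add, ← Complex.exp_add, ← Complex.exp_add,
      ← Complex.exp_add]
    congr 1; push_cast; ring
  rw [h, Complex.exp_int_mul_two_pi_mul_I, one_mul]

lemma term_odd (τ x y : ℂ) (a b : ℤ) :
    gterm τ x (a + b + 1) * gterm τ y (a - b) =
      (-E (-y)) * (qterm τ (x + y) (a + 1) * pterm τ (x - y) b) := by
  have h : gterm τ x (a + b + 1) * gterm τ y (a - b)
      = Complex.exp ((a : ℂ) * (2 * (Real.pi : ℂ) * I)) *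
        (Complex.exp ((Real.pi : ℂ) * I) *
          (E (-y) * (qterm τ (x + y) (a + 1) * pterm τ (x - y) b))) := by
    rw [gterm, gterm, pterm, qterm, E, neg_one_zpow, neg_one_zpow]
    rw [← Complex.exp_add, ← Complex.exp_add, ← Complex.exp_add, ← Complex.exp_add,
      ← Complex.exp_add, ← Complex.exp_add, ← Complex.exp_add]
    congr 1; push_cast; ring
  rw [h, Complex.exp_int_mul_two_pi_mul_I, one_mul, Complex.exp_pi_mul_I]
  ring

def i₁ (p : ℤ × ℤ) : ℤ × ℤ := (p.1 + p.2, p.1 - p.2)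
def i₂ (p : ℤ × ℤ) : ℤ × ℤ := (p.1 + p.2 + 1, p.1 - p.2)

lemma hinj₁ : Function.Injective i₁ := by
  intro p q h; simp only [i₁, Prod.ext_iff] at h ⊢; omega
lemma hinj₂ : Function.Injective i₂ := by
  intro p q h; simp only [i₂, Prod.ext_iff] at h ⊢; omega

lemma hcompl : Set.range i₂ = (Set.range i₁)ᶜ := by
  ext p
  simp only [Set.mem_range, Set.mem_compl_iff, i₁, i₂, Prod.ext_iff, Prod.exists]
  constructor
  · rintro ⟨a, b, h1, h2⟩ ⟨c, d, h3, h4⟩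
    omega
  · intro h
    by_cases hpar : (p.1 + p.2) % 2 = 0
    · exact absurd ⟨(p.1 + p.2)/2, (p.1 - p.2)/2, by omega, by omega⟩ h
    · exact ⟨(p.1 + p.2 - 1)/2, (p.1 - p.2 - 1)/2, by omega, by omega⟩

theorem star {τ : ℂ} (hτ : 0 < τ.im) (x y : ℂ) :
    S τ x * S τ y =
      P τ (x + y) * Q τ (x - y) - E (-y) * (Q τ (x + y) * P τ (x - y)) := by
  set f : ℤ × ℤ → ℂ := fun p => gterm τ x p.1 * gterm τ y p.2 with hf
  have step1 : S τ x * S τ y = ∑' p : ℤ × ℤ, f p :=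
    tsum_mul_tsum_of_summable_norm (hg hτ x) (hg hτ y)
  have hLbase : HasSum (fun q : ℤ × ℤ => pterm τ (x+y) q.1 * qterm τ (x-y) q.2)
      (P τ (x+y) * Q τ (x-y)) := by
    have hs : Summable (fun q : ℤ × ℤ => pterm τ (x+y) q.1 * qterm τ (x-y) q.2) :=
      summable_mul_of_summable_norm (hp hτ _) (hq hτ _)
    have := hs.hasSum
    rwa [← tsum_mul_tsum_of_summable_norm (hp hτ _) (hq hτ _)] at this
  have hL : HasSum (f ∘ i₁) (P τ (x+y) * Q τ (x-y)) := by
    have h : f ∘ i₁ = fun q : ℤ × ℤ => pterm τ (x+y) q.1 * qterm τ (x-y) q.2 := by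
      funext q
      exact term_even τ x y q.1 q.2
    rw [h]; exact hLbase
  have hRbase : HasSum (fun q : ℤ × ℤ => qterm τ (x+y) q.1 * pterm τ (x-y) q.2)
      (Q τ (x+y) * P τ (x-y)) := by
    have hs : Summable (fun q : ℤ × ℤ => qterm τ (x+y) q.1 * pterm τ (x-y) q.2) :=
      summable_mul_of_summable_norm (hq hτ _) (hp hτ _)
    have := hs.hasSum
    rwa [← tsum_mul_tsum_of_summable_norm (hq hτ _) (hp hτ _)] at this
  have hRshift : HasSum (fun q : ℤ × ℤ => qterm τ (x+y) (q.1 + 1) * pterm τ (x-y) q.2)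
      (Q τ (x+y) * P τ (x-y)) := by
    have h := ((Equiv.addRight (1:ℤ)).prodCongr (Equiv.refl ℤ)).hasSum_iff
      (f := fun q : ℤ × ℤ => qterm τ (x+y) q.1 * pterm τ (x-y) q.2)
      (a := Q τ (x+y) * P τ (x-y))
    rw [← h] at hRbase
    exact hRbase
  have hR : HasSum (f ∘ i₂) (-E (-y) * (Q τ (x+y) * P τ (x-y))) := by
    have h : f ∘ i₂ = fun q : ℤ × ℤ =>
        (-E (-y)) * (qterm τ (x+y) (q.1 + 1) * pterm τ (x-y) q.2) := by
      funext q
      exact term_odd τ x y q.1 q.2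
    rw [h]
    exact hRshift.mul_left _
  have hL' : HasSum (f ∘ (↑) : Set.range i₁ → ℂ) (P τ (x+y) * Q τ (x-y)) := by
    rw [← (Equiv.ofInjective i₁ hinj₁).hasSum_iff]; exact hL
  have hR' : HasSum (f ∘ (↑) : Set.range i₂ → ℂ) (-E (-y) * (Q τ (x+y) * P τ (x-y))) := by
    rw [← (Equiv.ofInjective i₂ hinj₂).hasSum_iff]; exact hR
  have hiscompl : IsCompl (Set.range i₁) (Set.range i₂) := by
    rw [hcompl]; exact isCompl_compl
  have hsum := (hL'.add_isCompl hiscompl hR').tsum_eq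
  rw [step1, hsum]
  ring

lemma term_neg (τ z : ℂ) (n : ℤ) :
    gterm τ (-z) (-(n + 1)) = (-(E z)) * gterm τ z n := by
  have h : gterm τ (-z) (-(n + 1))
      = Complex.exp (((-(n+1) : ℤ) : ℂ) * (2 * (Real.pi : ℂ) * I)) *
        (Complex.exp ((Real.pi : ℂ) * I) * (E z * gterm τ z n)) := by
    rw [gterm, gterm, E, neg_one_zpow, neg_one_zpow]
    rw [← Complex.exp_add, ← Complex.exp_add, ← Complex.exp_add, ← Complex.exp_add,
      ← Complex.exp_add]
    congr 1; push_cast; ring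
  rw [h, Complex.exp_int_mul_two_pi_mul_I, one_mul, Complex.exp_pi_mul_I]
  ring

lemma S_neg (τ z : ℂ) : S τ (-z) = -(E z * S τ z) := by
  have he := Equiv.tsum_eq ((Equiv.addRight (1:ℤ)).trans (Equiv.neg ℤ)) (gterm τ (-z))
  rw [S, ← he]
  have h : ∀ n : ℤ, gterm τ (-z) (((Equiv.addRight (1:ℤ)).trans (Equiv.neg ℤ)) n)
      = (-(E z)) * gterm τ z n := by
    intro n
    have h2 : ((Equiv.addRight (1:ℤ)).trans (Equiv.neg ℤ)) n = -(n + 1) := by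
      simp [Equiv.trans_apply]
    rw [h2, term_neg]
  rw [tsum_congr h, tsum_mul_left]
  rw [S]; ring

theorem starstar {τ : ℂ} (hτ : 0 < τ.im) (a b c d : ℂ) :
    E (c - b) * ((S τ (a+b) * S τ (a-b)) * (S τ (c+d) * S τ (c-d)))
      = (S τ (a+c) * S τ (a-c)) * (S τ (b+d) * S τ (b-d))
        - (S τ (a+d) * S τ (a-d)) * (S τ (b+c) * S τ (b-c)) := by
  have h1 := star hτ (a+b) (a-b)
  rw [show a+b+(a-b) = 2*a by ring, show a+b-(a-b) = 2*b by ring,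
    show -(a-b) = b - a by ring] at h1
  have h2 := star hτ (c+d) (c-d)
  rw [show c+d+(c-d) = 2*c by ring, show c+d-(c-d) = 2*d by ring,
    show -(c-d) = d - c by ring] at h2
  have h3 := star hτ (a+c) (a-c)
  rw [show a+c+(a-c) = 2*a by ring, show a+c-(a-c) = 2*c by ring,
    show -(a-c) = c - a by ring] at h3
  have h4 := star hτ (b+d) (b-d)
  rw [show b+d+(b-d) = 2*b by ring, show b+d-(b-d) = 2*d by ring,
    show -(b-d) = d - b by ring] at h4
  have h5 := star hτ (a+d) (a-d)
  rw [show a+d+(a-d) = 2*a by ring, show a+d-(a-d) = 2*d by ring,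
    show -(a-d) = d - a by ring] at h5
  have h6 := star hτ (b+c) (b-c)
  rw [show b+c+(b-c) = 2*b by ring, show b+c-(b-c) = 2*c by ring,
    show -(b-c) = c - b by ring] at h6
  rw [h1, h2, h3, h4, h5, h6]
  rw [E_sub a b, E_sub c d, E_sub a c, E_sub b d, E_sub a d, E_sub b c]
  field_simp [E_ne]
  ring

theorem key {τ : ℂ} (hτ : 0 < τ.im) (u η z₁ z₂ : ℂ) :
    E z₂ * (theta τ (η + u + (z₁ - z₂)) * theta τ (η + z₂) * theta τ u * theta τ z₁)
      = E z₂ * (theta τ (u + (z₁ - z₂)) * theta τ (η + u) * theta τ z₂ * theta τ (η + z₁))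
        + theta τ (u - z₂) * theta τ (u + (η + z₁)) * theta τ η * theta τ (z₁ - z₂) := by
  have hs := starstar hτ (η + (u + z₁)/2) ((u + z₁)/2 - z₂) ((u + z₁)/2) ((u - z₁)/2)
  rw [show η + (u + z₁)/2 + ((u + z₁)/2 - z₂) = η + u + (z₁ - z₂) by ring,
    show η + (u + z₁)/2 - ((u + z₁)/2 - z₂) = η + z₂ by ring,
    show (u + z₁)/2 + (u - z₁)/2 = u by ring,
    show (u + z₁)/2 - (u - z₁)/2 = z₁ by ring,
    show η + (u + z₁)/2 + (u + z₁)/2 = u + (η + z₁) by ring,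
    show η + (u + z₁)/2 - (u + z₁)/2 = η by ring,
    show (u + z₁)/2 - z₂ + (u - z₁)/2 = u - z₂ by ring,
    show (u + z₁)/2 - z₂ - (u - z₁)/2 = z₁ - z₂ by ring,
    show η + (u + z₁)/2 + (u - z₁)/2 = η + u by ring,
    show η + (u + z₁)/2 - (u - z₁)/2 = η + z₁ by ring,
    show (u + z₁)/2 - z₂ + (u + z₁)/2 = u + (z₁ - z₂) by ring,
    show (u + z₁)/2 - z₂ - (u + z₁)/2 = -z₂ by ring,
    show (u + z₁)/2 - ((u + z₁)/2 - z₂) = z₂ by ring,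
    S_neg τ z₂] at hs
  simp only [theta_S]
  linear_combination (Complex.exp (2 * (Real.pi : ℂ) * I * τ / 8))^4 * hs

lemma theta_neg (τ z : ℂ) : theta τ (-z) = -(E z * theta τ z) := by
  rw [theta_S, theta_S, S_neg]; ring

end PhiAux

set_option maxHeartbeats 2000000 in
open PhiAux in
/-- `φ(η+u, z₁−z₂)·φ(η, z₂)·φ(u, η)
  = φ(u, z₁−z₂)·φ(η, z₁)·φ(u, η) + φ(−u, z₂)·φ(u, z₁+η)·φ(η, z₁)`. -/
theorem phi_three_factor_identity (τ : ℂ) (hτ : 0 < τ.im) (u η z₁ z₂ : ℂ)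
    (hu : theta τ u ≠ 0) (hη : theta τ η ≠ 0) (hηu : theta τ (η + u) ≠ 0)
    (hz₁ : theta τ z₁ ≠ 0) (hz₂ : theta τ z₂ ≠ 0) (hz₁₂ : theta τ (z₁ - z₂) ≠ 0)
    (h1 : theta τ (z₁ + η) ≠ 0) (h2 : theta τ (η + u + (z₁ - z₂)) ≠ 0)
    (h3 : theta τ (u + (z₁ - z₂)) ≠ 0) (h4 : theta τ (η + z₁) ≠ 0)
    (h5 : theta τ (η + z₂) ≠ 0) (h6 : theta τ (u + η) ≠ 0)
    (h7 : theta τ (u + (z₁ + η)) ≠ 0) :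
    phi τ (η + u) (z₁ - z₂) * phi τ η z₂ * phi τ u η =
      phi τ u (z₁ - z₂) * phi τ η z₁ * phi τ u η +
        phi τ (-u) z₂ * phi τ u (z₁ + η) * phi τ η z₁ := by
  have hneg : phi τ (-u) z₂
      = E (u - z₂) * theta τ (u - z₂) * theta' τ 0 / (E u * (theta τ u * theta τ z₂)) := by
    rw [phi, show -u + z₂ = -(u - z₂) by ring, theta_neg τ (u - z₂), theta_neg τ u]
    field_simp
  rw [hneg]
  simp only [phi]
  rw [show u + η = η + u from add_comm u η, show z₁ + η = η + z₁ from add_comm z₁ η]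
  have hk := key hτ u η z₁ z₂
  have hE : E (u - z₂) * E z₂ = E u := by
    rw [E, E, E, ← Complex.exp_add]; congr 1; ring
  field_simp [hu, hη, hηu, hz₁, hz₂, hz₁₂, h2, h3, h4, h5, E_ne]
  have hD : E u * (theta τ u * theta τ z₂) * (theta τ u * theta τ (η + z₁)) *
      (theta τ η * theta τ z₁) ≠ 0 := by
    exact mul_ne_zero (mul_ne_zero (mul_ne_zero (E_ne u) (mul_ne_zero hu hz₂))
      (mul_ne_zero hu h4)) (mul_ne_zero hη hz₁)
  rw [← hE]
  linear_combination (E (u - z₂) * theta' τ 0 ^ 3) * hk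

end
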